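/- The function c : (0,∞)² → (0,∞) defined implicitly by e^{-6Δ/c} + e^{-6I/c} = 1 is differentiable, with partial derivatives ∂c/∂Δ = 6η/h(η) and ∂c/∂I = 6(1-η)/h(η), where η = e^{-6Δ/c} and h(η) = -η ln η - (1-η) ln(1-η). -/

import Mathlib

open Real

private lemma exp_lt_one_aux {b c : ℝ} (hb : 0 < b) (hcp : 0 < c) :
    Real.exp (-6 * b / c) < 1 := by
  rw [Real.exp_lt_one_iff]
  apply div_neg_of_neg_of_pos (by linarith) hcp

/-- Auxiliary function: `Δ` as an explicit function of `c` (for fixed other variable `b`). -/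
private noncomputable def Fa (b c : ℝ) : ℝ := -(c / 6) * Real.log (1 - Real.exp (-6 * b / c))

private lemma Fa_hasDerivAt {b c : ℝ} (hb : 0 < b) (hcp : 0 < c) :
    HasDerivAt (Fa b)
      (-(Real.log (1 - Real.exp (-6 * b / c))) / 6 +
        b * Real.exp (-6 * b / c) / (c * (1 - Real.exp (-6 * b / c)))) c := by
  have hc0 : c ≠ 0 := hcp.ne'
  have he1 : Real.exp (-6 * b / c) < 1 := exp_lt_one_aux hb hcp
  have hpos : 0 < 1 - Real.exp (-6 * b / c) := by linarith
  have hu : HasDerivAt (fun c : ℝ => -6 * b / c) (6 * b / c ^ 2) c := by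
    have h := (hasDerivAt_inv hc0).const_mul (-6 * b)
    simp only [div_eq_mul_inv]
    refine h.congr_deriv ?_
    ring
  have he : HasDerivAt (fun c : ℝ => 1 - Real.exp (-6 * b / c))
      (-(Real.exp (-6 * b / c) * (6 * b / c ^ 2))) c := (hu.exp.const_sub 1)
  have hlog : HasDerivAt (fun c : ℝ => Real.log (1 - Real.exp (-6 * b / c)))
      (-(Real.exp (-6 * b / c) * (6 * b / c ^ 2)) / (1 - Real.exp (-6 * b / c))) c :=
    he.log hpos.ne'
  have hid : HasDerivAt (fun c : ℝ => -(c / 6)) (-(1 / 6)) c := by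
    exact ((hasDerivAt_id' c).div_const 6).neg
  have := hid.mul hlog
  refine this.congr_deriv ?_
  set E := Real.exp (-6 * b / c) with hE
  field_simp [hc0, hpos.ne']

/-- Master lemma: an implicit solution `g` of `e^{-6y/g y} + e^{-6b/g y} = 1` has the
stated derivative at any `a > 0`. -/
private lemma master (b : ℝ) (hb : 0 < b) (g : ℝ → ℝ)
    (hg : ∀ y : ℝ, 0 < y → 0 < g y ∧
      Real.exp (-6 * y / g y) + Real.exp (-6 * b / g y) = 1)
    (a : ℝ) (ha : 0 < a) :
    HasDerivAt g
      (6 * Real.exp (-6 * a / g a) /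
        (-(Real.exp (-6 * a / g a)) * Real.log (Real.exp (-6 * a / g a)) -
          (1 - Real.exp (-6 * a / g a)) * Real.log (1 - Real.exp (-6 * a / g a)))) a := by
  obtain ⟨hc0pos, heq⟩ := hg a ha
  set c₀ := g a with hc₀
  -- basic facts
  have hμpos : 0 < Real.exp (-6 * a / c₀) := Real.exp_pos _
  have hμlt : Real.exp (-6 * a / c₀) < 1 := exp_lt_one_aux ha hc0pos
  set μ := Real.exp (-6 * a / c₀) with hμ
  have hkey : 1 - Real.exp (-6 * b / c₀) = μ := by
    have : Real.exp (-6 * b / c₀) = 1 - μ := by linarith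
    linarith
  -- derivative expression positivity at arbitrary c > 0
  have hDpos : ∀ c : ℝ, 0 < c →
      0 < -(Real.log (1 - Real.exp (-6 * b / c))) / 6 +
        b * Real.exp (-6 * b / c) / (c * (1 - Real.exp (-6 * b / c))) := by
    intro c hcp
    have he1 : Real.exp (-6 * b / c) < 1 := exp_lt_one_aux hb hcp
    have hpos : 0 < 1 - Real.exp (-6 * b / c) := by linarith
    have hexp : 0 < Real.exp (-6 * b / c) := Real.exp_pos _
    have hlogneg : Real.log (1 - Real.exp (-6 * b / c)) < 0 :=
      Real.log_neg hpos (by linarith)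
    have h2 : 0 < b * Real.exp (-6 * b / c) / (c * (1 - Real.exp (-6 * b / c))) := by
      positivity
    have h1 : 0 < -(Real.log (1 - Real.exp (-6 * b / c))) / 6 := by linarith
    linarith
  -- strict monotonicity of Fa b on Ioi 0
  have hmono : StrictMonoOn (Fa b) (Set.Ioi 0) := by
    apply strictMonoOn_of_deriv_pos (convex_Ioi 0)
    · intro x hx
      exact ((Fa_hasDerivAt hb hx).differentiableAt.continuousAt).continuousWithinAt
    · intro x hx
      rw [interior_Ioi] at hx
      rw [(Fa_hasDerivAt hb hx).deriv]
      exact hDpos x hx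
  -- left inverse property
  have hinv : ∀ y : ℝ, 0 < y → Fa b (g y) = y := by
    intro y hy
    obtain ⟨hgy, heqy⟩ := hg y hy
    have : 1 - Real.exp (-6 * b / g y) = Real.exp (-6 * y / g y) := by linarith
    rw [Fa, this, Real.log_exp]
    field_simp
  have hFc₀ : Fa b c₀ = a := hinv a ha
  -- continuity of g at a
  have hgcont : ContinuousAt g a := by
    rw [Metric.continuousAt_iff]
    intro ε hε
    set ε' := min (ε / 2) (c₀ / 2) with hε'
    have hε'pos : 0 < ε' := lt_min (by linarith) (by linarith)
    have hε'le : ε' ≤ c₀ / 2 := min_le_right _ _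
    have hmem1 : c₀ - ε' ∈ Set.Ioi (0:ℝ) := by simp; linarith
    have hmem2 : c₀ + ε' ∈ Set.Ioi (0:ℝ) := by simp; linarith
    have hmemc : c₀ ∈ Set.Ioi (0:ℝ) := hc0pos
    have ha₁ : Fa b (c₀ - ε') < a := by
      rw [← hFc₀]; exact hmono hmem1 hmemc (by linarith)
    have ha₂ : a < Fa b (c₀ + ε') := by
      rw [← hFc₀]; exact hmono hmemc hmem2 (by linarith)
    refine ⟨min (a - Fa b (c₀ - ε')) (min (Fa b (c₀ + ε') - a) a),
      lt_min (by linarith) (lt_min (by linarith) ha), ?_⟩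
    intro y hy
    rw [Real.dist_eq] at hy ⊢
    have h1 : |y - a| < a - Fa b (c₀ - ε') := lt_of_lt_of_le hy (min_le_left _ _)
    have h2 : |y - a| < Fa b (c₀ + ε') - a :=
      lt_of_lt_of_le hy ((min_le_right _ _).trans (min_le_left _ _))
    have h3 : |y - a| < a := lt_of_lt_of_le hy ((min_le_right _ _).trans (min_le_right _ _))
    rw [abs_lt] at h1 h2 h3
    have hy0 : 0 < y := by linarith
    obtain ⟨hgy, -⟩ := hg y hy0
    have hFy : Fa b (g y) = y := hinv y hy0
    have hlow : c₀ - ε' < g y := by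
      by_contra hcon
      push_neg at hcon
      have := hmono.le_iff_le (Set.mem_Ioi.2 hgy) hmem1 |>.2 hcon
      rw [hFy] at this
      linarith
    have hhigh : g y < c₀ + ε' := by
      by_contra hcon
      push_neg at hcon
      have := hmono.le_iff_le hmem2 (Set.mem_Ioi.2 hgy) |>.2 hcon
      rw [hFy] at this
      linarith
    have : |g y - c₀| < ε' := by rw [abs_lt]; constructor <;> linarith
    have hε'lt : ε' ≤ ε / 2 := min_le_left _ _
    calc |g y - g a| = |g y - c₀| := by rw [hc₀]
      _ < ε' := this
      _ < ε := by linarith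
  -- apply inverse derivative theorem
  have hfd : HasDerivAt (Fa b)
      (-(Real.log (1 - Real.exp (-6 * b / c₀))) / 6 +
        b * Real.exp (-6 * b / c₀) / (c₀ * (1 - Real.exp (-6 * b / c₀)))) (g a) :=
    Fa_hasDerivAt hb hc0pos
  have hfg : ∀ᶠ y in nhds a, Fa b (g y) = y := by
    filter_upwards [Ioi_mem_nhds ha] with y hy using hinv y hy
  have hD := hDpos c₀ hc0pos
  have hder := HasDerivAt.of_local_left_inverse hgcont hfd (ne_of_gt hD) hfg
  refine hder.congr_deriv ?_
  -- now prove the derivative values agree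
  have hb' : Real.exp (-6 * b / c₀) = 1 - μ := by linarith
  have hlogμ : Real.log μ = -6 * a / c₀ := Real.log_exp _
  have hc0ne : c₀ ≠ 0 := ne_of_gt hc0pos
  have hlog1μ : Real.log (1 - μ) = -6 * b / c₀ := by rw [← hb', Real.log_exp]
  have hS : 0 < 6 * μ * a + 6 * b * (1 - μ) := by nlinarith
  have e1 : -μ * Real.log μ - (1 - μ) * Real.log (1 - μ)
      = (6 * μ * a + 6 * b * (1 - μ)) / c₀ := by
    rw [hlogμ, hlog1μ]; field_simp; ring
  have e2 : -(Real.log (1 - Real.exp (-6 * b / c₀))) / 6 +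
      b * Real.exp (-6 * b / c₀) / (c₀ * (1 - Real.exp (-6 * b / c₀)))
      = (6 * μ * a + 6 * b * (1 - μ)) / (6 * (c₀ * μ)) := by
    rw [hkey, hb', hlogμ]
    field_simp
  rw [e1, e2, inv_div, div_div_eq_mul_div]
  ring

theorem stmt5 (c : ℝ → ℝ → ℝ)
    (hc : ∀ Δ I : ℝ, 0 < Δ → 0 < I →
      0 < c Δ I ∧ Real.exp (-6 * Δ / c Δ I) + Real.exp (-6 * I / c Δ I) = 1)
    (Δ I : ℝ) (hΔ : 0 < Δ) (hI : 0 < I) :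
    HasDerivAt (fun Δ' => c Δ' I)
      (6 * Real.exp (-6 * Δ / c Δ I) /
        (-(Real.exp (-6 * Δ / c Δ I)) * Real.log (Real.exp (-6 * Δ / c Δ I)) -
          (1 - Real.exp (-6 * Δ / c Δ I)) * Real.log (1 - Real.exp (-6 * Δ / c Δ I)))) Δ ∧
    HasDerivAt (fun I' => c Δ I')
      (6 * (1 - Real.exp (-6 * Δ / c Δ I)) /
        (-(Real.exp (-6 * Δ / c Δ I)) * Real.log (Real.exp (-6 * Δ / c Δ I)) -
          (1 - Real.exp (-6 * Δ / c Δ I)) * Real.log (1 - Real.exp (-6 * Δ / c Δ I)))) I := by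
  obtain ⟨hcpos, heq⟩ := hc Δ I hΔ hI
  constructor
  · exact master I hI (fun Δ' => c Δ' I) (fun y hy => hc y I hy hI) Δ hΔ
  · have h := master Δ hΔ (fun I' => c Δ I')
      (fun y hy => ⟨(hc Δ y hΔ hy).1, by have := (hc Δ y hΔ hy).2; linarith⟩) I hI
    convert h using 2
    · -- numerator: 6 * (1 - exp(-6Δ/c)) = 6 * exp(-6I/c)
      have : Real.exp (-6 * I / c Δ I) = 1 - Real.exp (-6 * Δ / c Δ I) := by linarith
      rw [this]
    · -- denominator equality with μ = exp(-6I/c) = 1 - η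
      have hμη : Real.exp (-6 * I / c Δ I) = 1 - Real.exp (-6 * Δ / c Δ I) := by linarith
      rw [hμη]
      ring_nf
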